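/- arXiv:1608.00417 — 3 statements merged into one kernel-verified Lean document; each statement's English description precedes it below -/
import Mathlib

section
/- Let x : ℕ → Bool be an infinite binary sequence (x i denoting the i-th bit for i ≥ 1) and let p_x = ∑_{i=1}^∞ (4·[x i] + 1)/8^i, where [b] = 1 if b is true and 0 otherwise (so p_x is the real number with binary expansion 0.x₁01x₂01x₃01⋯, and 1/7 ≤ p_x ≤ 5/7). For every k ≥ 1, if X is a random variable distributed according to the binomial distribution with 64^k trials and success probability p_x (e.g. the PMF `PMF.binomial` on Fin (64^k + 1)), then the probability that the binary digit of X at position 3k+2 (i.e. Nat.testBit X (3k+2)) equals x k is at least 3/4. -/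
open scoped ENNReal

namespace BinAux

noncomputable def f (x : ℕ → Bool) (i : ℕ) : ℝ :=
  (4 * (if x (i + 1) then (1 : ℝ) else 0) + 1) / 8 ^ (i + 1)

lemma f_nonneg (x : ℕ → Bool) (i : ℕ) : 0 ≤ f x i := by
  unfold f; positivity

lemma f_le (x : ℕ → Bool) (i : ℕ) : f x i ≤ 5 * (1/8 : ℝ) ^ (i+1) := by
  unfold f
  rw [div_le_iff₀ (by positivity)]
  have : ((1:ℝ)/8) ^ (i+1) * 8 ^ (i+1) = 1 := by
    rw [← mul_pow]; norm_num
  split <;> nlinarith [this]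

lemma f_ge (x : ℕ → Bool) (i : ℕ) : (1/8 : ℝ) ^ (i+1) ≤ f x i := by
  unfold f
  rw [le_div_iff₀ (by positivity)]
  have : ((1:ℝ)/8) ^ (i+1) * 8 ^ (i+1) = 1 := by
    rw [← mul_pow]; norm_num
  split <;> nlinarith [this]

lemma summable_geom : Summable (fun i : ℕ => (1/8 : ℝ) ^ (i+1)) := by
  exact (summable_geometric_of_lt_one (by norm_num) (by norm_num)).comp_injective
    (add_left_injective 1)

lemma tsum_geom : (∑' i : ℕ, (1/8 : ℝ) ^ (i+1)) = 1/7 := by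
  have h := tsum_geometric_of_lt_one (r := (1/8:ℝ)) (by norm_num) (by norm_num)
  calc (∑' i : ℕ, (1/8 : ℝ) ^ (i+1)) = ∑' i : ℕ, (1/8:ℝ) * (1/8)^i := by
        congr 1; funext i; rw [pow_succ]; ring
    _ = (1/8) * ∑' i : ℕ, (1/8:ℝ)^i := by rw [tsum_mul_left]
    _ = 1/7 := by rw [h]; norm_num

lemma summable_f (x : ℕ → Bool) : Summable (f x) := by
  refine Summable.of_nonneg_of_le (f_nonneg x) (f_le x) ?_
  exact summable_geom.mul_left 5

lemma tsum_f_le (x : ℕ → Bool) : (∑' i, f x i) ≤ 5/7 := by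
  have := Summable.tsum_le_tsum (f_le x) (summable_f x) (summable_geom.mul_left 5)
  rw [tsum_mul_left, tsum_geom] at this
  linarith

lemma le_tsum_f (x : ℕ → Bool) : (1/7 : ℝ) ≤ ∑' i, f x i := by
  have := Summable.tsum_le_tsum (f_ge x) summable_geom (summable_f x)
  rw [tsum_geom] at this
  linarith

def a (x : ℕ → Bool) (i : ℕ) : ℕ := 4 * (x i).toNat + 1

def M (x : ℕ → Bool) (k : ℕ) : ℕ :=
  ∑ i ∈ Finset.range (2 * k), a x (i + 1) * 8 ^ (2 * k - 1 - i)

lemma np_split (x : ℕ → Bool) (k : ℕ) :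
    (8 : ℝ) ^ (2 * k) * (∑' i, f x i) =
      (M x k : ℝ) + ∑' i, f (fun j => x (j + 2 * k)) i := by
  rw [← Summable.sum_add_tsum_nat_add (f := f x) (2 * k) (summable_f x)]
  rw [mul_add]
  congr 1
  · rw [Finset.mul_sum, M]
    push_cast
    refine Finset.sum_congr rfl fun i hi => ?_
    have hi' : i < 2 * k := Finset.mem_range.mp hi
    unfold f a
    have h8 : (8:ℝ) ^ (2*k) = 8 ^ (i+1) * 8 ^ (2*k-1-i) := by
      rw [← pow_add]; congr 1; omega
    rw [h8]
    have : (8:ℝ) ^ (i+1) ≠ 0 := by positivity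
    cases x (i+1) <;> simp [Bool.toNat] <;> field_simp <;> ring
  · rw [← tsum_mul_left]
    congr 1
    funext i
    unfold f
    have h8 : (8:ℝ) ^ (i + 2*k + 1) = 8 ^ (2*k) * 8 ^ (i+1) := by
      rw [← pow_add]; congr 1; omega
    rw [show i + 2*k + 1 = (i + 2*k) + 1 from rfl] at *
    rw [h8]
    have h1 : (8:ℝ) ^ (2*k) ≠ 0 := by positivity
    have h2 : (8:ℝ) ^ (i+1) ≠ 0 := by positivity
    field_simp; ring

lemma sum_lt_pow (c : ℕ → ℕ) (hc : ∀ j, c j ≤ 7) (k : ℕ) :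
    ∑ j ∈ Finset.range k, c j * 8 ^ j < 8 ^ k := by
  induction k with
  | zero => simp
  | succ k ih =>
    rw [Finset.sum_range_succ, pow_succ]
    have := hc k
    nlinarith [pow_pos (show 0 < 8 by norm_num) k]

lemma M_decomp (x : ℕ → Bool) (k : ℕ) (hk : 1 ≤ k) :
    ∃ A L : ℕ, L < 8 ^ k ∧
      M x k = A * 8 ^ (k + 1) + a x k * 8 ^ k + L := by
  have h2k : 2 * k = k + k := by ring
  unfold M
  rw [h2k, Finset.sum_range_add]
  obtain ⟨k', rfl⟩ : ∃ k', k = k' + 1 := ⟨k - 1, by omega⟩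
  rw [Finset.sum_range_succ]
  refine ⟨∑ i ∈ Finset.range k', a x (i+1) * 8 ^ (k' - 1 - i),
    ∑ i ∈ Finset.range (k'+1), a x (k' + 1 + i + 1) * 8 ^ (k' - i), ?_, ?_⟩
  · calc ∑ i ∈ Finset.range (k'+1), a x (k' + 1 + i + 1) * 8 ^ (k' - i)
        = ∑ i ∈ Finset.range (k'+1), a x (k' + 1 + (k' - i) + 1) * 8 ^ i := by
          rw [← Finset.sum_range_reflect]
          refine Finset.sum_congr rfl fun i hi => ?_
          have : i < k' + 1 := Finset.mem_range.mp hi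
          congr 2 <;> omega
      _ < 8 ^ (k' + 1) := by
          apply sum_lt_pow
          intro j; unfold a; cases x (k' + 1 + (k' - j) + 1) <;> simp [Bool.toNat]
  · have e1 : (k'+1) + (k'+1) - 1 - k' = k' + 1 := by omega
    rw [e1]
    congr 1
    · congr 1
      · rw [Finset.sum_mul]
        refine Finset.sum_congr rfl fun i hi => ?_
        have : i < k' := Finset.mem_range.mp hi
        rw [mul_assoc, ← pow_add]
        congr 2
        omega
    · refine Finset.sum_congr rfl fun i hi => ?_
      have : i < k' + 1 := Finset.mem_range.mp hi
      congr 2 <;> omega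

lemma testBit_of_close (x : ℕ → Bool) (k : ℕ) (hk : 1 ≤ k) (m : ℕ)
    (h1 : M x k + 1 ≤ m + 2 ^ (3 * k)) (h2 : m ≤ M x k + 2 ^ (3 * k)) :
    m.testBit (3 * k + 2) = x k := by
  obtain ⟨A, L, hL, hM⟩ := M_decomp x k hk
  have h8 : (8:ℕ) ^ k = 2 ^ (3 * k) := by
    rw [show (8:ℕ) = 2^3 from rfl, ← pow_mul]
  have h8' : (8:ℕ) ^ (k+1) = 8 * 2 ^ (3*k) := by
    rw [pow_succ, h8]; ring
  set P := 2 ^ (3 * k) with hP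
  set t := (x k).toNat with ht
  have ht1 : t ≤ 1 := by rw [ht]; cases x k <;> simp
  have ha : a x k = 4 * t + 1 := rfl
  rw [h8, h8', ha] at hM
  have hs : ∃ s, m = (2 * A + t) * (4 * P) + s ∧ s < 4 * P := by
    refine ⟨m - (2 * A + t) * (4 * P), ?_, ?_⟩ <;>
    · have hB : (2 * A + t) * (4 * P) = 8 * (A * P) + t * 4 * P := by ring
      have hM' : M x k = 8 * (A * P) + t * 4 * P + P + L := by
        rw [hM]; ring
      rcases Nat.le_one_iff_eq_zero_or_eq_one.mp ht1 with h | h <;>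
        (rw [h] at hB hM' ⊢; omega)
  obtain ⟨s, rfl, hslt⟩ := hs
  have hdiv : ((2 * A + t) * (4 * P) + s) / (2 ^ (3*k+2)) = 2 * A + t := by
    have h4P : (2:ℕ) ^ (3*k+2) = 4 * P := by rw [hP, pow_add]; ring
    rw [h4P, add_comm, Nat.add_mul_div_right _ _ (by positivity : 0 < 4 * P),
      Nat.div_eq_of_lt hslt, zero_add]
  rw [Nat.testBit_eq_decide_div_mod_eq, hdiv]
  rcases Nat.le_one_iff_eq_zero_or_eq_one.mp ht1 with h | h
  · have : x k = false := by cases hxk : x k <;> simp_all [ht, Bool.toNat]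
    rw [this, h]
    simp [Nat.mul_mod_right]
  · have : x k = true := by cases hxk : x k <;> simp_all [ht, Bool.toNat]
    rw [this, h]
    simp [Nat.add_mul_mod_self_left]

lemma var_eval (p : ℝ) (n : ℕ) :
    ∑ ν ∈ Finset.range (n+1),
      ((n : ℝ) * p - ν)^2 * (p^ν * (1-p)^(n-ν) * (n.choose ν : ℝ)) = n * p * (1-p) := by
  have h := bernsteinPolynomial.variance ℝ n
  have h2 := congrArg (Polynomial.eval p) h
  simp only [Polynomial.eval_finset_sum, Polynomial.eval_mul, Polynomial.eval_pow,
    Polynomial.eval_sub, Polynomial.eval_smul, Polynomial.eval_natCast, Polynomial.eval_X,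
    Polynomial.eval_one, bernsteinPolynomial, smul_eq_mul, Polynomial.eval_sub] at h2
  rw [nsmul_eq_mul] at h2
  rw [← h2]
  refine Finset.sum_congr rfl fun ν hν => ?_
  ring

lemma sum_w (p : ℝ) (n : ℕ) :
    ∑ ν ∈ Finset.range (n+1), p^ν * (1-p)^(n-ν) * (n.choose ν : ℝ) = 1 := by
  have h := add_pow p (1-p) n
  simp only [add_sub_cancel, one_pow] at h
  rw [← h]

lemma pmf_apply (p : ℝ) (hp0 : 0 ≤ p) (hp1 : p ≤ 1) (hple : ENNReal.ofReal p ≤ 1)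
    (n : ℕ) (i : Fin (n+1)) :
    PMF.binomial (Real.toNNReal p) (ENNReal.coe_le_one_iff.mp hple) n i
      = ENNReal.ofReal (p ^ i.val * (1-p) ^ (n - i.val) * (n.choose i.val : ℝ)) := by
  rw [PMF.binomial_apply]
  rw [show ((Real.toNNReal p : NNReal) : ℝ≥0∞) = ENNReal.ofReal p from rfl]
  simp only [Fin.val_last]
  rw [
    ENNReal.ofReal_mul (mul_nonneg (pow_nonneg hp0 _) (pow_nonneg (by linarith) _)),
    ENNReal.ofReal_mul (pow_nonneg hp0 _),
    ENNReal.ofReal_pow hp0, ENNReal.ofReal_pow (by linarith), ENNReal.ofReal_natCast,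
    ENNReal.ofReal_sub _ hp0, ENNReal.ofReal_one]

lemma toOuter {n : ℕ} (g : PMF (Fin (n+1))) (S : Set (Fin (n+1))) [DecidablePred (· ∈ S)] :
    g.toOuterMeasure S = ∑ i ∈ Finset.univ.filter (· ∈ S), g i := by
  rw [PMF.toOuterMeasure_apply, tsum_fintype, Finset.sum_filter]
  refine Finset.sum_congr rfl fun i _ => ?_
  rw [Set.indicator_apply]

end BinAux

/-- If a biased coin lands heads with probability
`p_x = 0.x₁01x₂01x₃01⋯` (binary), then after `64^k` tosses the binary digit of the
number of heads at position `3k+2` equals `x k` with probability at least `3/4`. -/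
theorem binomial_testBit_eq_bit_prob_ge
    (x : ℕ → Bool)
    (p : ℝ)
    (hp : p = ∑' i : ℕ, (4 * (if x (i + 1) then (1 : ℝ) else 0) + 1) / 8 ^ (i + 1))
    (hple : ENNReal.ofReal p ≤ 1)
    (k : ℕ) (hk : 1 ≤ k) :
    (3 : ℝ≥0∞) / 4 ≤
      (PMF.binomial (Real.toNNReal p) (ENNReal.coe_le_one_iff.mp hple) (64 ^ k)).toOuterMeasure
        {m : Fin (64 ^ k + 1) | Nat.testBit m.val (3 * k + 2) = x k} := by
  classical
  have hpf : p = ∑' i, BinAux.f x i := hp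
  have hp17 : 1/7 ≤ p := hpf ▸ BinAux.le_tsum_f x
  have hp57 : p ≤ 5/7 := hpf ▸ BinAux.tsum_f_le x
  have hp0 : (0:ℝ) ≤ p := by linarith
  have hp1 : p ≤ 1 := by linarith
  set n := 64 ^ k with hn
  set r := ∑' i, BinAux.f (fun j => x (j + 2*k)) i with hrdef
  have hr1 : 1/7 ≤ r := BinAux.le_tsum_f _
  have hr2 : r ≤ 5/7 := BinAux.tsum_f_le _
  have hnp : ((n:ℝ)) * p = (BinAux.M x k : ℝ) + r := by
    have h := BinAux.np_split x k
    rw [← hpf] at h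
    have h64 : ((n:ℝ)) = 8 ^ (2*k) := by
      rw [hn]; push_cast
      rw [show (64:ℝ) = 8^2 by norm_num, ← pow_mul, mul_comm]
    rw [h64]; exact h
  set P : ℕ := 2 ^ (3*k) with hPdef
  have hn2 : n = P * P := by
    rw [hn, hPdef, ← pow_add, show 3*k+3*k = 6*k by ring,
      show (64:ℕ) = 2^6 by norm_num, ← pow_mul]
  set w : ℕ → ℝ := fun m => p ^ m * (1-p) ^ (n - m) * (n.choose m : ℝ) with hwdef
  have hw0 : ∀ m, 0 ≤ w m := fun m =>
    mul_nonneg (mul_nonneg (pow_nonneg hp0 _) (pow_nonneg (by linarith) _)) (Nat.cast_nonneg _)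
  set S : Set (Fin (n+1)) := {m | Nat.testBit m.val (3*k+2) = x k} with hS
  set G := Finset.univ.filter (· ∈ S) with hG
  set B := Finset.univ.filter (fun m => ¬ (m ∈ S)) with hB
  have key : (PMF.binomial (Real.toNNReal p) (ENNReal.coe_le_one_iff.mp hple) n).toOuterMeasure S
      = ENNReal.ofReal (∑ i ∈ G, w i.val) := by
    rw [BinAux.toOuter]
    rw [ENNReal.ofReal_sum_of_nonneg (fun i _ => hw0 i.val)]
    exact Finset.sum_congr rfl fun i _ => BinAux.pmf_apply p hp0 hp1 hple n i
  rw [key]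
  have h34 : (3:ℝ≥0∞)/4 = ENNReal.ofReal (3/4) := by
    rw [ENNReal.ofReal_div_of_pos (by norm_num)]
    norm_num
  rw [h34]
  apply ENNReal.ofReal_le_ofReal
  have htot : ∑ i : Fin (n+1), w i.val = 1 := by
    rw [Fin.sum_univ_eq_sum_range (fun m => w m) (n+1)]
    exact BinAux.sum_w p n
  have hsplit : ∑ i ∈ G, w i.val + ∑ i ∈ B, w i.val = 1 := by
    rw [← htot, hG, hB]
    exact Finset.sum_filter_add_sum_filter_not _ _ _
  have hPpos : (0:ℝ) < (P:ℝ) := by positivity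
  have hcheb : ∀ i ∈ B, ((P:ℝ))^2 * w i.val ≤ w i.val * ((n:ℝ)*p - i.val)^2 := by
    intro i hi
    have hbad : ¬ (Nat.testBit i.val (3*k+2) = x k) := by
      rw [hB] at hi
      simp only [Finset.mem_filter, Finset.mem_univ, true_and] at hi
      rw [hS] at hi
      exact hi
    have hfar : i.val + P ≤ BinAux.M x k ∨ BinAux.M x k + P + 1 ≤ i.val := by
      by_contra hcon
      push_neg at hcon
      exact hbad (BinAux.testBit_of_close x k hk i.val (by omega) (by omega))
    have hsq : ((P:ℝ))^2 ≤ ((n:ℝ)*p - i.val)^2 := by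
      rw [hnp]
      rcases hfar with h | h
      · have hc : (i.val:ℝ) + P ≤ (BinAux.M x k : ℝ) := by exact_mod_cast h
        nlinarith
      · have hc : (BinAux.M x k : ℝ) + P + 1 ≤ (i.val:ℝ) := by exact_mod_cast h
        nlinarith
    nlinarith [hw0 i.val]
  have hvar : ∑ i ∈ B, w i.val * ((n:ℝ)*p - i.val)^2 ≤ (P:ℝ)^2 * (p * (1-p)) := by
    have h1 : ∑ i ∈ B, w i.val * ((n:ℝ)*p - i.val)^2
        ≤ ∑ i : Fin (n+1), w i.val * ((n:ℝ)*p - i.val)^2 := by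
      rw [hB]
      exact Finset.sum_le_sum_of_subset_of_nonneg (Finset.filter_subset _ _)
        (fun i _ _ => mul_nonneg (hw0 _) (sq_nonneg _))
    have h2 : ∑ i : Fin (n+1), w i.val * ((n:ℝ)*p - i.val)^2 = (n:ℝ) * p * (1-p) := by
      rw [Fin.sum_univ_eq_sum_range (fun m => w m * ((n:ℝ)*p - m)^2) (n+1)]
      rw [← BinAux.var_eval p n]
      refine Finset.sum_congr rfl fun m _ => by rw [hwdef]; ring
    have h3 : ((n:ℝ)) = (P:ℝ)^2 := by rw [hn2]; push_cast; ring
    calc ∑ i ∈ B, w i.val * ((n:ℝ)*p - i.val)^2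
        ≤ (n:ℝ) * p * (1-p) := h1.trans_eq h2
      _ = (P:ℝ)^2 * (p * (1-p)) := by rw [h3]; ring
  have hB14 : ∑ i ∈ B, w i.val ≤ 1/4 := by
    have hsum : (P:ℝ)^2 * ∑ i ∈ B, w i.val ≤ (P:ℝ)^2 * (p*(1-p)) := by
      rw [Finset.mul_sum]
      exact le_trans (Finset.sum_le_sum hcheb) hvar
    have hpq : p * (1-p) ≤ 1/4 := by nlinarith [sq_nonneg (p - 1/2)]
    have hP2 : (0:ℝ) < (P:ℝ)^2 := by positivity
    have := (mul_le_mul_iff_right₀ hP2).mp hsum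
    linarith
  linarith
end

section
/- Let x : ℕ → Bool be an infinite binary sequence (x i denoting the i-th bit for i ≥ 1) and let p_x = ∑_{i=1}^∞ (4·[x i] + 1)/8^i, where [b] = 1 if b is true and 0 otherwise. Then for every k ≥ 1 and every natural number m, if |(m : ℝ) − 64^k · p_x| ≤ 8^k, then the binary digit of m at position 3k+2 equals x k, i.e. Nat.testBit m (3k+2) = x k. -/
open Finset

lemma testBit_aux (n A r : ℕ) (hr : r < 2 ^ (n + 1)) :
    Nat.testBit (2 ^ (n + 1) * A + r) n = decide (2 ^ n ≤ r) := by
  have h0 : 0 < 2 ^ n := Nat.pow_pos (by norm_num)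
  have h2 : (2 : ℕ) ^ (n + 1) = 2 ^ n * 2 := pow_succ 2 n
  rw [Nat.testBit_eq_decide_div_mod_eq]
  have hdiv : (2 ^ (n + 1) * A + r) / 2 ^ n = 2 * A + r / 2 ^ n := by
    rw [show 2 ^ (n + 1) * A = 2 ^ n * (2 * A) by rw [h2]; ring,
      Nat.mul_add_div h0]
  have hlt : r / 2 ^ n < 2 := Nat.div_lt_of_lt_mul (by omega)
  have hle : (2 ^ n ≤ r) ↔ r / 2 ^ n = 1 := by
    constructor
    · intro h
      have := (Nat.one_le_div_iff h0).mpr h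
      omega
    · intro h
      exact (Nat.one_le_div_iff h0).mp (by omega)
  rw [hdiv, Nat.mul_add_mod, Nat.mod_eq_of_lt hlt]
  simp [decide_eq_decide, hle]

lemma geom8 (k : ℕ) : 7 * ∑ e ∈ Finset.range k, 8 ^ e + 1 = 8 ^ k := by
  induction k with
  | zero => simp
  | succ n ih => rw [Finset.sum_range_succ, pow_succ]; omega

lemma hgeo : ∑' i : ℕ, ((8 : ℝ)⁻¹) ^ (i + 1) = 1 / 7 := by
  have h : ∀ i : ℕ, ((8 : ℝ)⁻¹) ^ (i + 1) = 8⁻¹ * (8⁻¹) ^ i := fun i => by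
    rw [pow_succ]; ring
  rw [tsum_congr h, tsum_mul_left,
    tsum_geometric_of_lt_one (by norm_num) (by norm_num)]
  norm_num

lemma bit_final (k A C m : ℕ) (b : Bool) (hk : 1 ≤ k)
    (hC1 : 1 ≤ C) (hC2 : C < 8 ^ k)
    (hge : 8 ^ (k + 1) * A + (4 * (if b then 1 else 0) + 1) * 8 ^ k + C + 1 ≤ m + 8 ^ k)
    (hle : m ≤ 8 ^ (k + 1) * A + (4 * (if b then 1 else 0) + 1) * 8 ^ k + C + 8 ^ k) :
    Nat.testBit m (3 * k + 2) = b := by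
  have h8succ : (8 : ℕ) ^ (k + 1) = 8 * 8 ^ k := by rw [pow_succ]; ring
  have hpow23 : (2 : ℕ) ^ (3 * k + 2 + 1) = 8 ^ (k + 1) := by
    rw [show (8 : ℕ) = 2 ^ 3 from rfl, ← pow_mul, show 3 * (k + 1) = 3 * k + 2 + 1 by ring]
  have hpow22 : (2 : ℕ) ^ (3 * k + 2) = 4 * 8 ^ k := by
    rw [show (8 : ℕ) = 2 ^ 3 from rfl, show (4 : ℕ) = 2 ^ 2 from rfl, ← pow_mul, ← pow_add,
      show 2 + 3 * k = 3 * k + 2 by ring]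
  cases b with
  | true =>
    norm_num at hge hle
    have hmge : 8 ^ (k + 1) * A ≤ m := by omega
    have hmeq : m = 2 ^ (3 * k + 2 + 1) * A + (m - 8 ^ (k + 1) * A) := by
      rw [hpow23]; omega
    have hrlt : m - 8 ^ (k + 1) * A < 2 ^ (3 * k + 2 + 1) := by
      rw [hpow23]; omega
    rw [hmeq, testBit_aux _ _ _ hrlt, hpow22, decide_eq_true_eq]
    omega
  | false =>
    norm_num at hge hle
    have hmge : 8 ^ (k + 1) * A ≤ m := by omega
    have hmeq : m = 2 ^ (3 * k + 2 + 1) * A + (m - 8 ^ (k + 1) * A) := by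
      rw [hpow23]; omega
    have hrlt : m - 8 ^ (k + 1) * A < 2 ^ (3 * k + 2 + 1) := by
      rw [hpow23]; omega
    rw [hmeq, testBit_aux _ _ _ hrlt, hpow22]
    simp only [decide_eq_false_iff_not, not_le]
    omega

/-- Deterministic core of Lemma 1: if a natural number `m` differs from
`64^k · p_x` by at most `8^k`, where `p_x = 0.x₁01x₂01x₃01⋯` in binary, then the binary
digit of `m` at position `3k+2` equals `x k`. -/
theorem testBit_eq_of_close_to_binomial_mean
    (x : ℕ → Bool)
    (p : ℝ)
    (hp : p = ∑' i : ℕ, (4 * (if x (i + 1) then (1 : ℝ) else 0) + 1) / 8 ^ (i + 1))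
    (k : ℕ) (hk : 1 ≤ k) (m : ℕ)
    (hm : |(m : ℝ) - 64 ^ k * p| ≤ 8 ^ k) :
    Nat.testBit m (3 * k + 2) = x k := by
  set f : ℕ → ℝ := fun i => (4 * (if x (i + 1) then (1 : ℝ) else 0) + 1) / 8 ^ (i + 1)
    with hf
  have hfeq : ∀ i, f i = (4 * (if x (i + 1) then (1 : ℝ) else 0) + 1) * (8⁻¹) ^ (i + 1) := by
    intro i
    simp only [hf, div_eq_mul_inv, inv_pow]
  have hcif : ∀ j, (1 : ℝ) ≤ 4 * (if x j then (1 : ℝ) else 0) + 1 ∧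
      4 * (if x j then (1 : ℝ) else 0) + 1 ≤ 5 := by
    intro j; split_ifs <;> norm_num
  have hpow_pos : ∀ i : ℕ, (0 : ℝ) < (8⁻¹) ^ i := fun i => by positivity
  have hflb : ∀ i, (8⁻¹ : ℝ) ^ (i + 1) ≤ f i := by
    intro i
    rw [hfeq]
    nlinarith [(hcif (i + 1)).1, hpow_pos (i + 1)]
  have hfub : ∀ i, f i ≤ 5 * (8⁻¹ : ℝ) ^ (i + 1) := by
    intro i
    rw [hfeq]
    nlinarith [(hcif (i + 1)).2, hpow_pos (i + 1)]
  have hsumgeo : Summable fun i : ℕ => ((8 : ℝ)⁻¹) ^ (i + 1) :=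
    (summable_nat_add_iff 1).2 (summable_geometric_of_lt_one (by norm_num) (by norm_num))
  have hsum : Summable f :=
    Summable.of_nonneg_of_le (fun i => le_trans (le_of_lt (hpow_pos (i + 1))) (hflb i))
      hfub (hsumgeo.mul_left 5)
  -- tail
  set T : ℝ := ∑' i : ℕ, f (i + 2 * k) with hT
  have hsumtail : Summable fun i : ℕ => f (i + 2 * k) := (summable_nat_add_iff (2 * k)).2 hsum
  have hsplit : ∑ i ∈ range (2 * k), f i + T = p := by
    rw [hp]; exact Summable.sum_add_tsum_nat_add (2 * k) hsum
  have hshift : ∀ i : ℕ, ((8 : ℝ)⁻¹) ^ (i + 2 * k + 1) = (8⁻¹) ^ (2 * k) * (8⁻¹) ^ (i + 1) := by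
    intro i
    rw [show i + 2 * k + 1 = 2 * k + (i + 1) by ring, pow_add]
  have hTlb : (8⁻¹ : ℝ) ^ (2 * k) * (1 / 7) ≤ T := by
    rw [← hgeo, ← tsum_mul_left]
    refine Summable.tsum_le_tsum (fun i => ?_) (hsumgeo.mul_left _) hsumtail
    calc (8⁻¹ : ℝ) ^ (2 * k) * (8⁻¹) ^ (i + 1) = (8⁻¹) ^ (i + 2 * k + 1) := (hshift i).symm
    _ ≤ f (i + 2 * k) := hflb _
  have hTub : T ≤ (8⁻¹ : ℝ) ^ (2 * k) * (5 / 7) := by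
    have h57 : (8⁻¹ : ℝ) ^ (2 * k) * (5 / 7) = 5 * ((8⁻¹ : ℝ) ^ (2 * k) * (1 / 7)) := by ring
    rw [h57, ← hgeo, ← tsum_mul_left, ← tsum_mul_left]
    refine Summable.tsum_le_tsum (fun i => ?_) hsumtail ((hsumgeo.mul_left _).mul_left 5)
    calc f (i + 2 * k) ≤ 5 * (8⁻¹) ^ (i + 2 * k + 1) := hfub _
    _ = 5 * ((8⁻¹) ^ (2 * k) * (8⁻¹) ^ (i + 1)) := by rw [hshift i]
  have h64 : (64 : ℝ) ^ k = 8 ^ (2 * k) := by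
    rw [show (64 : ℝ) = 8 ^ 2 by norm_num, ← pow_mul, mul_comm]
  have hcancel : (8 : ℝ) ^ (2 * k) * (8⁻¹) ^ (2 * k) = 1 := by
    rw [← mul_pow]; norm_num
  have h8pos : (0 : ℝ) < 8 ^ (2 * k) := by positivity
  have hu1 : 1 / 7 ≤ (64 : ℝ) ^ k * T := by
    rw [h64]
    nlinarith [mul_le_mul_of_nonneg_left hTlb (le_of_lt h8pos)]
  have hu2 : (64 : ℝ) ^ k * T ≤ 5 / 7 := by
    rw [h64]
    nlinarith [mul_le_mul_of_nonneg_left hTub (le_of_lt h8pos)]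
  -- the integer part
  set t : ℕ → ℕ := fun i => (4 * (if x (i + 1) then 1 else 0) + 1) * 8 ^ (2 * k - (i + 1))
    with ht
  set N : ℕ := ∑ i ∈ range (2 * k), t i with hN
  have hNcast : (N : ℝ) = 64 ^ k * ∑ i ∈ range (2 * k), f i := by
    rw [hN, mul_sum, Nat.cast_sum]
    refine sum_congr rfl fun i hi => ?_
    have hi' : i + 1 ≤ 2 * k := by
      have := mem_range.mp hi; omega
    have key : (8 : ℝ) ^ (2 * k - (i + 1)) * 8 ^ (i + 1) = 8 ^ (2 * k) := by
      rw [← pow_add, Nat.sub_add_cancel hi']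
    simp only [ht]
    rw [hfeq, h64]
    push_cast [apply_ite (Nat.cast : ℕ → ℝ)]
    rw [inv_pow]
    have h8ne : ((8 : ℝ) ^ (i + 1)) ≠ 0 := by positivity
    have key2 : (8 : ℝ) ^ (2 * k) * ((8 : ℝ) ^ (i + 1))⁻¹ = 8 ^ (2 * k - (i + 1)) := by
      field_simp
      linarith [key]
    rw [← key2]
    ring
  -- bounds on m as a natural number
  have habs := abs_le.mp hm
  have h64pT : (64 : ℝ) ^ k * p = N + 64 ^ k * T := by
    rw [← hsplit, mul_add, hNcast]
  have hm1 : (m : ℝ) ≤ N + 8 ^ k + 5 / 7 := by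
    have := habs.2; rw [h64pT] at this; linarith
  have hm2 : (N : ℝ) + 1 / 7 ≤ m + 8 ^ k := by
    have := habs.1; rw [h64pT] at this; linarith
  have hmle : m ≤ N + 8 ^ k := by
    have h : (m : ℝ) < ((N + 8 ^ k + 1 : ℕ) : ℝ) := by push_cast; linarith
    have := Nat.cast_lt.mp h
    omega
  have hmge : N + 1 ≤ m + 8 ^ k := by
    have h : ((N : ℕ) : ℝ) < ((m + 8 ^ k : ℕ) : ℝ) := by push_cast; linarith
    have := Nat.cast_lt.mp h
    omega
  -- structural decomposition of N
  set A : ℕ := ∑ i ∈ range (k - 1), (4 * (if x (i + 1) then 1 else 0) + 1) * 8 ^ (k - 2 - i)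
    with hA
  set C : ℕ := ∑ j ∈ range k, t (k + j) with hC
  have hsplitN : N = ∑ i ∈ range k, t i + C := by
    rw [hN, hC, two_mul, Finset.sum_range_add]
  have hheadN : ∑ i ∈ range k, t i = ∑ i ∈ range (k - 1), t i + t (k - 1) := by
    conv_lhs => rw [show k = (k - 1) + 1 by omega]
    exact Finset.sum_range_succ t (k - 1)
  have hAeq : ∑ i ∈ range (k - 1), t i = 8 ^ (k + 1) * A := by
    rw [hA, mul_sum]
    refine sum_congr rfl fun i hi => ?_
    have hi' : i < k - 1 := mem_range.mp hi
    simp only [ht]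
    have hpw : (8 : ℕ) ^ (2 * k - (i + 1)) = 8 ^ (k + 1) * 8 ^ (k - 2 - i) := by
      rw [← pow_add]; congr 1; omega
    rw [hpw]; ring
  have hterm : t (k - 1) = (4 * (if x k then 1 else 0) + 1) * 8 ^ k := by
    simp only [ht]
    rw [show k - 1 + 1 = k by omega, show 2 * k - k = k by omega]
  have hC2 : C < 8 ^ k := by
    have hle5 : C ≤ ∑ j ∈ range k, 5 * 8 ^ (k - 1 - j) := by
      rw [hC]
      refine sum_le_sum fun j hj => ?_
      have hj' : j < k := mem_range.mp hj
      simp only [ht]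
      have he : 2 * k - (k + j + 1) = k - 1 - j := by omega
      rw [he]
      have hfive : 4 * (if x (k + j + 1) then 1 else 0) + 1 ≤ 5 := by split_ifs <;> omega
      exact Nat.mul_le_mul_right _ hfive
    have hrefl : ∑ j ∈ range k, (8 : ℕ) ^ (k - 1 - j) = ∑ j ∈ range k, 8 ^ j :=
      Finset.sum_range_reflect (fun j => 8 ^ j) k
    rw [← Finset.mul_sum, hrefl] at hle5
    have := geom8 k
    omega
  have hC1 : 1 ≤ C := by
    have hmem : (0 : ℕ) ∈ range k := mem_range.mpr hk
    have hle' : t (k + 0) ≤ C := by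
      rw [hC]
      exact Finset.single_le_sum (f := fun j => t (k + j)) (fun i _ => Nat.zero_le _) hmem
    have hpos : 1 ≤ t (k + 0) := by
      simp only [ht]
      have h1 : 1 ≤ 4 * (if x (k + 0 + 1) then 1 else 0) + 1 := by split_ifs <;> omega
      have h2 : 1 ≤ 8 ^ (2 * k - (k + 0 + 1)) := Nat.one_le_pow _ _ (by norm_num)
      calc (1 : ℕ) = 1 * 1 := by norm_num
      _ ≤ _ := Nat.mul_le_mul h1 h2
    omega
  have hNdecomp : N = 8 ^ (k + 1) * A + (4 * (if x k then 1 else 0) + 1) * 8 ^ k + C := by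
    rw [hsplitN, hheadN, hAeq, hterm]
  rw [hNdecomp] at hmge hmle
  exact bit_final k A C m (x k) hk hC1 hC2 hmge hmle
end

section
/- Let x : ℕ → ℝ be a sequence with x i ∈ {−1, 1} for every i ≥ 1, and let θ_x = 2π · ∑_{i=1}^∞ x i / 8^{i+1}. Then for every j ≥ 1 there exist an integer N and a real number δ with |δ| ≤ π/28 such that 8^j · θ_x = 2π·N + (π/4)·(x j) + δ. -/
open Real

private lemma adh_key (a : ℝ) (ha : |a| = 1) (n : ℕ) : |a / 8 ^ n| ≤ (1/8 : ℝ) ^ n := by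
  rw [abs_div, ha, abs_pow, abs_of_nonneg (by norm_num : (0:ℝ) ≤ 8), div_pow, one_pow]

/-- For `θ_x = 2π · ∑_{i=1}^∞ x i / 8^{i+1}` with `x i ∈ {−1, 1}` for
`i ≥ 1`, rotating `8^j` times by `θ_x` accumulates an angle equal, modulo `2π`, to
`(π/4)·(x j)` up to a perturbation `δ` with `|δ| ≤ π/28`. -/
theorem adh_angle_decomposition
    (x : ℕ → ℝ) (hx : ∀ i : ℕ, 1 ≤ i → x i = 1 ∨ x i = -1)
    (θ : ℝ) (hθ : θ = 2 * π * ∑' i : ℕ, x (i + 1) / 8 ^ (i + 2))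
    (j : ℕ) (hj : 1 ≤ j) :
    ∃ (N : ℤ) (δ : ℝ), |δ| ≤ π / 28 ∧
      8 ^ j * θ = 2 * π * N + (π / 4) * x j + δ := by
  have habs : ∀ i : ℕ, 1 ≤ i → |x i| = 1 := by
    intro i hi; rcases hx i hi with h | h <;> simp [h]
  -- geometric summability
  have hgeo : Summable (fun i : ℕ => (1/8 : ℝ) ^ (i + 2)) := by
    have h := (summable_geometric_of_lt_one (by norm_num : (0:ℝ) ≤ 1/8)
      (by norm_num : (1/8 : ℝ) < 1)).mul_right ((1/8 : ℝ) ^ 2)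
    exact h.congr fun i => by rw [pow_add]
  have hgeosum : ∑' i : ℕ, (1/8 : ℝ) ^ (i + 2) = 1 / 56 := by
    have hg0 := tsum_geometric_of_lt_one (by norm_num : (0:ℝ) ≤ 1/8)
      (by norm_num : (1/8 : ℝ) < 1)
    calc ∑' i : ℕ, (1/8 : ℝ) ^ (i + 2)
        = ∑' i : ℕ, (1/8 : ℝ) ^ i * (1/8)^2 := tsum_congr fun i => pow_add _ i 2
      _ = (∑' i : ℕ, (1/8 : ℝ) ^ i) * (1/8)^2 := tsum_mul_right
      _ = 1/56 := by rw [hg0]; norm_num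
  set f : ℕ → ℝ := fun i => x (i + 1) / 8 ^ (i + 2) with hf
  have hbound : ∀ i : ℕ, ‖f i‖ ≤ (1/8 : ℝ) ^ (i + 2) := by
    intro i
    exact adh_key _ (habs (i+1) (by omega)) (i+2)
  have hfs : Summable f := Summable.of_norm_bounded hgeo hbound
  set g : ℕ → ℝ := fun i => 8 ^ j * f i with hg
  have hgs : Summable g := hfs.mul_left _
  have h8j : (8:ℝ) ^ j ≠ 0 := by positivity
  -- tail
  set T : ℝ := ∑' i : ℕ, g (i + j) with hT
  have hsum : Summable (fun i => g (i + j)) := hgs.comp_injective (add_left_injective j)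
  have htail : ∀ i : ℕ, g (i + j) = x (i + j + 1) / 8 ^ (i + 2) := by
    intro i
    have h2 : (8:ℝ) ^ (i + j + 2) = 8 ^ j * 8 ^ (i + 2) := by
      rw [← pow_add]; ring_nf
    simp only [hg, hf]
    rw [h2]
    field_simp
  have hTbound : |T| ≤ 1 / 56 := by
    have h1 : ∀ i : ℕ, ‖g (i + j)‖ ≤ (1/8 : ℝ) ^ (i + 2) := by
      intro i
      rw [htail i]
      exact adh_key _ (habs _ (by omega)) (i+2)
    calc |T| ≤ ∑' i : ℕ, ‖g (i + j)‖ := by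
          simpa using norm_tsum_le_tsum_norm (hsum.norm)
      _ ≤ ∑' i : ℕ, (1/8 : ℝ) ^ (i + 2) := Summable.tsum_le_tsum h1 hsum.norm hgeo
      _ = 1 / 56 := hgeosum
  -- integer part
  set N : ℤ := ∑ i ∈ Finset.range (j - 1), (if x (i+1) = 1 then (1:ℤ) else -1) * 8 ^ (j - i - 2)
    with hN
  have hNcast : (N : ℝ) = ∑ i ∈ Finset.range (j - 1), g i := by
    rw [hN]
    push_cast
    apply Finset.sum_congr rfl
    intro i hi
    have hij : i + 2 ≤ j := by
      have := Finset.mem_range.mp hi; omega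
    have hpow : (8:ℝ) ^ j = 8 ^ (j - i - 2) * 8 ^ (i + 2) := by
      rw [← pow_add]; congr 1; omega
    have hterm : g i = x (i + 1) * 8 ^ (j - i - 2) := by
      simp only [hg, hf]
      rw [hpow]
      field_simp
    rw [hterm]
    rcases hx (i+1) (by omega) with h | h <;> rw [h] <;> norm_num
  -- split the sum
  have hsplit : ∑' i, g i = (N : ℝ) + x j / 8 + T := by
    rw [← Summable.sum_add_tsum_nat_add j hgs, ← hT]
    congr 1
    obtain ⟨k, rfl⟩ : ∃ k, j = k + 1 := ⟨j - 1, by omega⟩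
    norm_num at hNcast
    have hgk : g k = x (k + 1) / 8 := by
      simp only [hg, hf]
      have h2 : (8:ℝ) ^ (k + 2) = 8 ^ (k + 1) * 8 := by rw [pow_succ]
      rw [h2]
      field_simp
    rw [Finset.sum_range_succ, hNcast, hgk]
  refine ⟨N, 2 * π * T, ?_, ?_⟩
  · rw [abs_mul, abs_mul, abs_of_nonneg (by norm_num : (0:ℝ) ≤ 2),
      abs_of_nonneg Real.pi_pos.le]
    calc 2 * π * |T| ≤ 2 * π * (1/56) :=
          mul_le_mul_of_nonneg_left hTbound (by positivity)
      _ = π / 28 := by ring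
  · rw [hθ]
    have hmul : (8:ℝ)^j * (2 * π * ∑' i, f i) = 2 * π * ∑' i, g i := by
      simp only [hg]
      rw [tsum_mul_left]
      ring
    rw [hmul, hsplit]
    ring
end
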